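/- Let n ≥ 1 be an integer, τ > 0, and F : [0, τ] → ℝ a nonnegative continuous function with ∫₀^τ F(y) dy > 0, such that F(x₀) ≥ (x₀/x)^{n−1} F(x) whenever 0 < x₀ ≤ x ≤ τ (equivalently, y ↦ F(y)/y^{n−1} is nonincreasing on (0, τ]). Define b := (∫₀^τ y·F(y) dy) / (∫₀^τ F(y) dy). Then b ≤ n·τ/(n+1). -/

import Mathlib

/-- Analytic core of Fujita's inequality: if `F ≥ 0` is continuous on `[0,τ]`,
`∫₀^τ F > 0`, and `y ↦ F(y)/y^{n-1}` is nonincreasing (i.e.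
`F(x₀) ≥ (x₀/x)^{n-1} F(x)` for `0 < x₀ ≤ x ≤ τ`), then
`b = (∫₀^τ y F(y) dy)/(∫₀^τ F(y) dy) ≤ nτ/(n+1)`. -/
theorem stmt5 (n : ℕ) (hn : 1 ≤ n) (τ : ℝ) (hτ : 0 < τ) (F : ℝ → ℝ)
    (hF : ContinuousOn F (Set.Icc 0 τ))
    (hF0 : ∀ y ∈ Set.Icc (0 : ℝ) τ, 0 ≤ F y)
    (hpos : 0 < ∫ y in (0 : ℝ)..τ, F y)
    (hdec : ∀ x₀ x : ℝ, 0 < x₀ → x₀ ≤ x → x ≤ τ →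
      (x₀ / x) ^ (n - 1) * F x ≤ F x₀) :
    (∫ y in (0 : ℝ)..τ, y * F y) / (∫ y in (0 : ℝ)..τ, F y)
      ≤ n * τ / (n + 1) := by
  set c : ℝ := n * τ / (n + 1) with hc
  have hn1 : (0:ℝ) < (n:ℝ) := by exact_mod_cast Nat.lt_of_lt_of_le Nat.zero_lt_one hn
  have hn1' : (0:ℝ) < (n:ℝ) + 1 := by linarith
  have hcpos : 0 < c := div_pos (mul_pos hn1 hτ) hn1'
  have hcτ : c ≤ τ := by
    rw [hc, div_le_iff₀ hn1']
    nlinarith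
  have huIcc : Set.uIcc (0:ℝ) τ = Set.Icc 0 τ := Set.uIcc_of_le hτ.le
  have hF' : ContinuousOn F (Set.uIcc (0:ℝ) τ) := by rw [huIcc]; exact hF
  -- integrability
  have hFint : IntervalIntegrable F MeasureTheory.volume 0 τ :=
    hF'.intervalIntegrable
  have hyFint : IntervalIntegrable (fun y => y * F y) MeasureTheory.volume 0 τ :=
    (continuousOn_id.mul hF').intervalIntegrable
  have hcyFint : IntervalIntegrable (fun y => (c - y) * F y) MeasureTheory.volume 0 τ :=
    (((continuous_const.sub continuous_id).continuousOn).mul hF').intervalIntegrable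
  have hgcont : Continuous (fun y : ℝ => (c - y) * (y / c) ^ (n - 1) * F c) := by fun_prop
  have hgint : IntervalIntegrable (fun y : ℝ => (c - y) * (y / c) ^ (n - 1) * F c)
      MeasureTheory.volume 0 τ := hgcont.intervalIntegrable 0 τ
  have hnm : n - 1 + 1 = n := Nat.succ_pred_eq_of_pos hn
  -- the weight integrates to zero
  have hw : (∫ y in (0:ℝ)..τ, (c - y) * y ^ (n - 1)) = 0 := by
    have h1 : ∀ y : ℝ, (c - y) * y ^ (n - 1) = c * y ^ (n - 1) - y ^ n := by
      intro y
      have h2 : y ^ n = y ^ (n - 1) * y := by rw [← pow_succ, hnm]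
      rw [h2]; ring
    simp only [h1]
    rw [intervalIntegral.integral_sub
      (show IntervalIntegrable (fun y : ℝ => c * y ^ (n - 1)) MeasureTheory.volume 0 τ from
        (continuous_const.mul (continuous_pow _)).intervalIntegrable 0 τ)
      ((continuous_pow _).intervalIntegrable 0 τ),
      intervalIntegral.integral_const_mul, integral_pow, integral_pow]
    have hcast : ((n - 1 : ℕ) : ℝ) + 1 = (n : ℝ) := by
      rw [Nat.cast_sub hn]; push_cast; ring
    rw [hcast, hc]
    field_simp
    rw [hnm, zero_pow (by omega : n ≠ 0)]
    ring
  have hg0 : (∫ y in (0:ℝ)..τ, (c - y) * (y / c) ^ (n - 1) * F c) = 0 := by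
    have h1 : ∀ y : ℝ, (c - y) * (y / c) ^ (n - 1) * F c
        = (F c / c ^ (n - 1)) * ((c - y) * y ^ (n - 1)) := by
      intro y
      rw [div_pow]
      field_simp
    simp only [h1]
    rw [intervalIntegral.integral_const_mul, hw, mul_zero]
  -- pointwise inequality on (0, τ]
  have hptwise : ∀ y ∈ Set.Ioc (0:ℝ) τ,
      (c - y) * (y / c) ^ (n - 1) * F c ≤ (c - y) * F y := by
    intro y hy
    rcases le_or_gt y c with hyc | hcy
    · have h := hdec y c hy.1 hyc hcτ
      have hc0 : 0 ≤ c - y := by linarith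
      calc (c - y) * (y / c) ^ (n - 1) * F c = (c - y) * ((y / c) ^ (n - 1) * F c) := by ring
        _ ≤ (c - y) * F y := mul_le_mul_of_nonneg_left h hc0
    · have h := hdec c y hcpos hcy.le hy.2
      have hpow : (0:ℝ) < (y / c) ^ (n - 1) := pow_pos (div_pos hy.1 hcpos) _
      have h2 : F y ≤ (y / c) ^ (n - 1) * F c := by
        have hmul : (y / c) ^ (n - 1) * ((c / y) ^ (n - 1) * F y)
            ≤ (y / c) ^ (n - 1) * F c := mul_le_mul_of_nonneg_left h hpow.le
        have hid : (y / c) ^ (n - 1) * ((c / y) ^ (n - 1) * F y) = F y := by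
          rw [← mul_assoc, ← mul_pow, div_mul_div_comm, mul_comm y c,
            div_self (ne_of_gt (mul_pos hcpos hy.1)), one_pow, one_mul]
        rwa [hid] at hmul
      have hc0 : c - y ≤ 0 := by linarith
      calc (c - y) * (y / c) ^ (n - 1) * F c = (c - y) * ((y / c) ^ (n - 1) * F c) := by ring
        _ ≤ (c - y) * F y := mul_le_mul_of_nonpos_left h2 hc0
  have hmono : (∫ y in (0:ℝ)..τ, (c - y) * (y / c) ^ (n - 1) * F c)
      ≤ ∫ y in (0:ℝ)..τ, (c - y) * F y := by
    apply intervalIntegral.integral_mono_ae_restrict hτ.le hgint hcyFint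
    have h0 : ∀ᵐ y : ℝ, y ∉ ({0} : Set ℝ) :=
      MeasureTheory.measure_eq_zero_iff_ae_notMem.mp (MeasureTheory.measure_singleton 0)
    rw [Filter.EventuallyLE, MeasureTheory.ae_restrict_iff' measurableSet_Icc]
    filter_upwards [h0] with y hy0 hyIcc
    exact hptwise y ⟨lt_of_le_of_ne hyIcc.1 (Ne.symm (by simpa using hy0)), hyIcc.2⟩
  rw [hg0] at hmono
  have hsplit : (∫ y in (0:ℝ)..τ, (c - y) * F y)
      = c * (∫ y in (0:ℝ)..τ, F y) - ∫ y in (0:ℝ)..τ, y * F y := by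
    have h1 : ∀ y : ℝ, (c - y) * F y = c * F y - y * F y := fun y => by ring
    simp only [h1]
    rw [intervalIntegral.integral_sub (hFint.const_mul c) hyFint,
      intervalIntegral.integral_const_mul]
  rw [hsplit] at hmono
  rw [div_le_iff₀ hpos]
  linarith
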